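/- Let X be a finite-dimensional real inner product space, g : X → ℝ a convex function with min_{x∈X} g(x) < 0, C := {x : g(x) ≤ 0}, and x̄ ∈ X with x̄ ∉ C. Let d̄ := d(x̄, C). Suppose sequences {x_k}_{k≥0} ⊆ X, closed halfspaces {H_k}_{k≥0}, and {s_k}_{k≥0} ⊆ X satisfy, for all k ≥ 0: C ⊆ H_k; x_k is the metric projection of x̄ onto H_k; g(x_k) > 0; s_k ∈ ∂g(x_k); x_{k+1} is the metric projection of x̄ onto H_k ∩ C̃_k, where C̃_k := {x : g(x_k) + ⟨x − x_k, s_k⟩ ≤ 0}; and H_{k+1} := {x : ⟨x̄ − x_{k+1}, x − x_{k+1}⟩ ≤ 0}. Then, setting d_k := ‖x̄ − x_k‖ and v_k := d̄² − d_k², the sequence {v_k} is nonnegative and converges to zero at an O(1/k) rate; that is, there exists M > 0 such that 0 ≤ v_k ≤ M/k for all k ≥ 1. -/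

import Mathlib

open RealInnerProductSpace

lemma proj_inner_nonpos {X : Type*} [NormedAddCommGroup X] [InnerProductSpace ℝ X]
    {K : Set X} (hK : Convex ℝ K) {z w : X} (hw : w ∈ K)
    (hmin : ∀ y ∈ K, ‖z - w‖ ≤ ‖z - y‖) :
    ∀ y ∈ K, ⟪z - w, y - w⟫ ≤ 0 := by
  intro y hy
  by_contra hcon
  push_neg at hcon
  set c : ℝ := ⟪z - w, y - w⟫ with hc
  have hyw : (0:ℝ) < ‖y - w‖ ^ 2 := by
    have : y - w ≠ 0 := by
      intro h
      rw [hc, h, inner_zero_right] at hcon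
      exact lt_irrefl 0 hcon
    exact pow_pos (norm_pos_iff.mpr this) 2
  set t : ℝ := min 1 (c / ‖y - w‖ ^ 2) with ht
  have ht0 : 0 < t := lt_min one_pos (div_pos hcon hyw)
  have ht1 : t ≤ 1 := min_le_left _ _
  have htc : t * ‖y - w‖ ^ 2 ≤ c := by
    have := min_le_right 1 (c / ‖y - w‖ ^ 2)
    calc t * ‖y - w‖ ^ 2 ≤ (c / ‖y - w‖ ^ 2) * ‖y - w‖ ^ 2 := by
          exact mul_le_mul_of_nonneg_right this hyw.le
      _ = c := div_mul_cancel₀ _ (ne_of_gt hyw)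
  have hmem : w + t • (y - w) ∈ K := by
    have h := hK hw hy (by linarith : (0:ℝ) ≤ 1 - t) ht0.le (by ring)
    have he : (1 - t) • w + t • y = w + t • (y - w) := by
      rw [smul_sub, sub_smul, one_smul]; abel
    rwa [he] at h
  have h1 : ‖z - w‖ ≤ ‖z - (w + t • (y - w))‖ := hmin _ hmem
  have h2 : ‖z - (w + t • (y - w))‖ ^ 2
      = ‖z - w‖ ^ 2 - 2 * (t * c) + t ^ 2 * ‖y - w‖ ^ 2 := by
    have he : z - (w + t • (y - w)) = (z - w) - t • (y - w) := by abel
    rw [he, norm_sub_sq_real, real_inner_smul_right, norm_smul]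
    rw [mul_pow, Real.norm_eq_abs, sq_abs]
  have h3 : ‖z - w‖ ^ 2 ≤ ‖z - (w + t • (y - w))‖ ^ 2 :=
    pow_le_pow_left₀ (norm_nonneg _) h1 2
  nlinarith [mul_pos ht0 hcon]


set_option maxHeartbeats 1000000 in
/-- For the Dykstra-type iteration with subgradient outer approximations,
the values `v_k = d̄² - d_k²` are nonnegative and converge to zero at an `O(1/k)` rate. -/
theorem dykstra_level_set_one_over_k_rate
    {X : Type*} [NormedAddCommGroup X] [InnerProductSpace ℝ X] [FiniteDimensional ℝ X]
    (g : X → ℝ) (hg : ConvexOn ℝ Set.univ g)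
    (hmin : ∃ x₀ : X, g x₀ < 0 ∧ ∀ x, g x₀ ≤ g x)
    (C : Set X) (hC : C = {x : X | g x ≤ 0})
    (xbar : X) (hxbarC : xbar ∉ C)
    (dbar : ℝ) (hdbar : dbar = Metric.infDist xbar C)
    (x : ℕ → X) (H : ℕ → Set X) (s : ℕ → X)
    (hHhalf : ∀ k : ℕ, ∃ (a : X) (b : ℝ), a ≠ 0 ∧ H k = {y : X | ⟪a, y⟫ ≤ b})
    (hCH : ∀ k : ℕ, C ⊆ H k)
    (hxk : ∀ k : ℕ, x k ∈ H k)
    (hxkproj : ∀ k : ℕ, ∀ y ∈ H k, ‖xbar - x k‖ ≤ ‖xbar - y‖)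
    (hgpos : ∀ k : ℕ, 0 < g (x k))
    (hs : ∀ k : ℕ, ∀ y : X, g (x k) + ⟪s k, y - x k⟫ ≤ g y)
    (hxk1 : ∀ k : ℕ,
      x (k + 1) ∈ H k ∩ {y : X | g (x k) + ⟪y - x k, s k⟫ ≤ 0})
    (hxk1proj : ∀ k : ℕ, ∀ y ∈ H k ∩ {y : X | g (x k) + ⟪y - x k, s k⟫ ≤ 0},
      ‖xbar - x (k + 1)‖ ≤ ‖xbar - y‖)
    (hHk1 : ∀ k : ℕ,
      H (k + 1) = {y : X | ⟪xbar - x (k + 1), y - x (k + 1)⟫ ≤ 0})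
    (v : ℕ → ℝ) (hv : ∀ k : ℕ, v k = dbar ^ 2 - ‖xbar - x k‖ ^ 2) :
    ∃ M > (0 : ℝ), ∀ k ≥ 1, 0 ≤ v k ∧ v k ≤ M / (k : ℝ) := by
  obtain ⟨x₀, hx₀neg, hx₀min⟩ := hmin
  have hx₀C : x₀ ∈ C := by rw [hC]; exact hx₀neg.le
  have hCne : C.Nonempty := ⟨x₀, hx₀C⟩
  have hdbar0 : 0 ≤ dbar := hdbar ▸ Metric.infDist_nonneg
  set μ : ℝ := -g x₀ with hμ
  have hμpos : 0 < μ := neg_pos.mpr hx₀neg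
  -- d_k ≤ dbar
  have hdk : ∀ k, ‖xbar - x k‖ ≤ dbar := by
    intro k
    have := hCne.to_subtype
    rw [hdbar, Metric.infDist_eq_iInf]
    refine le_ciInf ?_
    rintro ⟨p, hp⟩
    rw [dist_eq_norm]
    exact hxkproj k p (hCH k hp)
  have hv0 : ∀ k, 0 ≤ v k := by
    intro k
    rw [hv]
    have := pow_le_pow_left₀ (norm_nonneg (xbar - x k)) (hdk k) 2
    linarith
  -- continuity, sup on ball
  have hgcont : Continuous g := by
    have h := hg.continuousOn isOpen_univ
    rwa [continuousOn_univ] at h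
  have hxbarball : xbar ∈ Metric.closedBall xbar (dbar + 1) := by
    simp [Metric.mem_closedBall]; linarith
  obtain ⟨zL, hzL, hLmax⟩ := (isCompact_closedBall xbar (dbar + 1)).exists_isMaxOn
    ⟨xbar, hxbarball⟩ hgcont.continuousOn
  set L : ℝ := g zL with hLdef
  have hL : ∀ y ∈ Metric.closedBall xbar (dbar + 1), g y ≤ L := fun y hy => hLmax hy
  have hgxbar : 0 < g xbar := by
    by_contra h
    push_neg at h
    exact hxbarC (by rw [hC]; exact h)
  have hLpos : 0 < L := lt_of_lt_of_le hgxbar (hL xbar hxbarball)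
  -- subgradient norm bound
  have hsnorm : ∀ k, ‖s k‖ ≤ L := by
    intro k
    rcases eq_or_ne (s k) 0 with h0 | h0
    · rw [h0, norm_zero]; exact hLpos.le
    · have hsn : (0:ℝ) < ‖s k‖ := norm_pos_iff.mpr h0
      set u : X := (‖s k‖)⁻¹ • s k with hu
      have hun : ‖u‖ = 1 := by
        rw [hu, norm_smul, norm_inv, norm_norm, inv_mul_cancel₀ (ne_of_gt hsn)]
      have hip : ⟪s k, (x k + u) - x k⟫ = ‖s k‖ := by
        rw [add_sub_cancel_left, hu, real_inner_smul_right, real_inner_self_eq_norm_sq, sq]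
        field_simp
      have hball : x k + u ∈ Metric.closedBall xbar (dbar + 1) := by
        rw [Metric.mem_closedBall, dist_eq_norm]
        have he : x k + u - xbar = -(xbar - x k) + u := by abel
        calc ‖x k + u - xbar‖ = ‖-(xbar - x k) + u‖ := by rw [he]
          _ ≤ ‖-(xbar - x k)‖ + ‖u‖ := norm_add_le _ _
          _ = ‖xbar - x k‖ + 1 := by rw [norm_neg, hun]
          _ ≤ dbar + 1 := by linarith [hdk k]
      have h1 := hs k (x k + u)
      rw [hip] at h1
      have h2 := hL _ hball
      linarith [(hgpos k).le]
  -- constants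
  set R : ℝ := ‖x₀ - xbar‖ + dbar + 1 with hR
  have hRpos : 0 < R := by positivity
  set c : ℝ := 2 * (dbar + 1) * R * L / μ with hcdef
  have hcpos : 0 < c := by positivity
  -- the key recursion
  have hrec : ∀ k, (v k) ^ 2 ≤ c ^ 2 * (v k - v (k + 1)) := by
    intro k
    set Δ : X := x (k + 1) - x k with hΔ
    -- Step A : ‖Δ‖² ≤ v k - v (k+1)
    have hconv : Convex ℝ (H k) := by
      obtain ⟨a, b, ha, hHeq⟩ := hHhalf k
      rw [hHeq]
      exact convex_halfSpace_le
        ⟨fun p q => inner_add_right a p q, fun r p => real_inner_smul_right a p r⟩ b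
    have hip : ⟪xbar - x k, Δ⟫ ≤ 0 := by
      have := proj_inner_nonpos hconv (hxk k) (hxkproj k) (x (k + 1)) (hxk1 k).1
      rwa [hΔ]
    have hexp : ‖xbar - x (k + 1)‖ ^ 2
        = ‖xbar - x k‖ ^ 2 - 2 * ⟪xbar - x k, Δ⟫ + ‖Δ‖ ^ 2 := by
      have he : xbar - x (k + 1) = (xbar - x k) - Δ := by rw [hΔ]; abel
      rw [he, norm_sub_sq_real]
    have hA : ‖Δ‖ ^ 2 ≤ v k - v (k + 1) := by
      rw [hv k, hv (k + 1)]
      linarith [hexp, hip]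
    -- Step B : v k ≤ c * ‖Δ‖
    have hgk := hgpos k
    have hden : (0:ℝ) < g (x k) + μ := by positivity
    set t : ℝ := g (x k) / (g (x k) + μ) with htdef
    have ht0 : 0 ≤ t := le_of_lt (div_pos hgk hden)
    have hz : g (x k + t • (x₀ - x k)) ≤ 0 := by
      have hcvx := hg.2 (Set.mem_univ (x k)) (Set.mem_univ x₀)
        (by linarith [div_le_one_of_le₀ (by linarith : g (x k) ≤ g (x k) + μ) hden.le] : (0:ℝ) ≤ 1 - t)
        ht0 (by ring)
      have he : (1 - t) • x k + t • x₀ = x k + t • (x₀ - x k) := by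
        rw [smul_sub, sub_smul, one_smul]; abel
      rw [he] at hcvx
      have hcalc : (1 - t) * g (x k) + t * g x₀ = 0 := by
        have ht' : t * (g (x k) + μ) = g (x k) := div_mul_cancel₀ _ (ne_of_gt hden)
        have hgx₀ : g x₀ = -μ := by rw [hμ]; ring
        rw [hgx₀]
        nlinarith [ht']
      calc g (x k + t • (x₀ - x k)) ≤ (1 - t) * g (x k) + t * g x₀ := hcvx
        _ = 0 := hcalc
    have hzC : x k + t • (x₀ - x k) ∈ C := by rw [hC]; exact hz
    have hdist : Metric.infDist (x k) C ≤ t * ‖x₀ - x k‖ := by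
      have h1 := Metric.infDist_le_dist_of_mem (x := x k) hzC
      have h2 : dist (x k) (x k + t • (x₀ - x k)) = t * ‖x₀ - x k‖ := by
        rw [dist_eq_norm]
        have he : x k - (x k + t • (x₀ - x k)) = -(t • (x₀ - x k)) := by abel
        rw [he, norm_neg, norm_smul, Real.norm_eq_abs, abs_of_nonneg ht0]
      rwa [h2] at h1
    have htle : t ≤ g (x k) / μ := by
      apply div_le_div_of_nonneg_left hgk.le hμpos
      linarith
    have hxnorm : ‖x₀ - x k‖ ≤ R := by
      have he : x₀ - x k = (x₀ - xbar) + (xbar - x k) := by abel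
      calc ‖x₀ - x k‖ = ‖(x₀ - xbar) + (xbar - x k)‖ := by rw [he]
        _ ≤ ‖x₀ - xbar‖ + ‖xbar - x k‖ := norm_add_le _ _
        _ ≤ R := by rw [hR]; linarith [hdk k]
    have hdist2 : Metric.infDist (x k) C ≤ g (x k) * R / μ := by
      calc Metric.infDist (x k) C ≤ t * ‖x₀ - x k‖ := hdist
        _ ≤ (g (x k) / μ) * R := by
            apply mul_le_mul htle hxnorm (norm_nonneg _)
            positivity
        _ = g (x k) * R / μ := by ring
    have htri : dbar ≤ ‖xbar - x k‖ + Metric.infDist (x k) C := by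
      rw [hdbar]
      have := Metric.infDist_le_infDist_add_dist (x := xbar) (y := x k) (s := C)
      rw [dist_eq_norm] at this
      linarith
    have hvk2 : v k ≤ 2 * (dbar + 1) * Metric.infDist (x k) C := by
      rw [hv]
      have hi0 : 0 ≤ Metric.infDist (x k) C := Metric.infDist_nonneg
      have h1 : dbar - ‖xbar - x k‖ ≤ Metric.infDist (x k) C := by linarith
      have h2 : dbar ^ 2 - ‖xbar - x k‖ ^ 2
          = (dbar + ‖xbar - x k‖) * (dbar - ‖xbar - x k‖) := by ring
      have h3 : (dbar + ‖xbar - x k‖) * (dbar - ‖xbar - x k‖)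
          ≤ (dbar + ‖xbar - x k‖) * Metric.infDist (x k) C :=
        mul_le_mul_of_nonneg_left h1 (by positivity)
      have h4 : (dbar + ‖xbar - x k‖) * Metric.infDist (x k) C
          ≤ (2 * (dbar + 1)) * Metric.infDist (x k) C :=
        mul_le_mul_of_nonneg_right (by linarith [hdk k]) hi0
      linarith
    have hgbound : g (x k) ≤ L * ‖Δ‖ := by
      have h1 : g (x k) + ⟪x (k + 1) - x k, s k⟫ ≤ 0 := (hxk1 k).2
      rw [← hΔ] at h1
      have h2 : ⟪-Δ, s k⟫ ≤ ‖-Δ‖ * ‖s k‖ := real_inner_le_norm _ _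
      rw [norm_neg, inner_neg_left] at h2
      have h3 : g (x k) ≤ ‖Δ‖ * ‖s k‖ := by linarith
      calc g (x k) ≤ ‖Δ‖ * ‖s k‖ := h3
        _ ≤ ‖Δ‖ * L := mul_le_mul_of_nonneg_left (hsnorm k) (norm_nonneg _)
        _ = L * ‖Δ‖ := by ring
    have hB : v k ≤ c * ‖Δ‖ := by
      calc v k ≤ 2 * (dbar + 1) * Metric.infDist (x k) C := hvk2
        _ ≤ 2 * (dbar + 1) * (g (x k) * R / μ) := by
            apply mul_le_mul_of_nonneg_left hdist2 (by positivity)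
        _ ≤ 2 * (dbar + 1) * ((L * ‖Δ‖) * R / μ) := by
            gcongr
        _ = c * ‖Δ‖ := by rw [hcdef]; ring
    -- combine
    have hsq : (v k) ^ 2 ≤ c ^ 2 * ‖Δ‖ ^ 2 := by
      have := pow_le_pow_left₀ (hv0 k) hB 2
      rwa [mul_pow] at this
    calc (v k) ^ 2 ≤ c ^ 2 * ‖Δ‖ ^ 2 := hsq
      _ ≤ c ^ 2 * (v k - v (k + 1)) := by
          apply mul_le_mul_of_nonneg_left hA (by positivity)
  -- final induction
  have hm : (0:ℝ) < c ^ 2 := by positivity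
  have hkey : ∀ k : ℕ, 1 ≤ k → (k : ℝ) * v k ≤ c ^ 2 := by
    intro k hk
    induction k, hk using Nat.le_induction with
    | base =>
      simp only [Nat.cast_one, one_mul]
      nlinarith [hrec 1, hv0 1, hv0 2]
    | succ n hn ih =>
      have hKa : (n : ℝ) * v n ≤ c ^ 2 := ih
      have hK1 : (1:ℝ) ≤ (n : ℝ) := by exact_mod_cast hn
      have ha0 := hv0 n
      have hb0 := hv0 (n + 1)
      have hrn := hrec n
      have haM : v n ≤ c ^ 2 := by nlinarith
      have hfac : (c ^ 2 - (n : ℝ) * v n) * (c ^ 2 - v n) ≥ 0 :=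
        mul_nonneg (by linarith) (by linarith)
      have hstep : c ^ 2 * v (n + 1) ≤ c ^ 2 * v n - (v n) ^ 2 := by linarith [hrn]
      have hmul : ((n : ℝ) + 1) * (c ^ 2 * v (n + 1))
          ≤ ((n : ℝ) + 1) * (c ^ 2 * v n - (v n) ^ 2) :=
        mul_le_mul_of_nonneg_left hstep (by linarith)
      have hid : ((n : ℝ) + 1) * (c ^ 2 * v n - (v n) ^ 2)
          = c ^ 2 * c ^ 2 - ((c ^ 2 - (n : ℝ) * v n) * (c ^ 2 - v n) + (v n) ^ 2) := by ring
      have hfin : c ^ 2 * (((n : ℝ) + 1) * v (n + 1)) ≤ c ^ 2 * c ^ 2 := by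
        have hsq := sq_nonneg (v n)
        linarith [hmul, hid, hfac, hsq]
      have := le_of_mul_le_mul_left hfin hm
      push_cast
      linarith
  refine ⟨c ^ 2, hm, ?_⟩
  intro k hk
  refine ⟨hv0 k, ?_⟩
  have hkpos : (0:ℝ) < (k : ℝ) := by exact_mod_cast Nat.pos_of_ne_zero (by omega)
  rw [le_div_iff₀ hkpos]
  linarith [hkey k hk]
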